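/- For any weight-2 vector c ∈ F_2^16, the coset H_16 + c contains exactly 8 vectors of weight 2. -/

import Mathlib

open Finset
open scoped Classical

/-- Rows spanning the first-order Reed-Muller code RM(1,4) of length 16. -/
def r1 : Fin 16 → ZMod 2 := fun _ => 1
def r2 : Fin 16 → ZMod 2 := fun i => if i.val < 8 then 1 else 0
def r3 : Fin 16 → ZMod 2 := fun i => if i.val % 8 < 4 then 1 else 0
def r4 : Fin 16 → ZMod 2 := fun i => if i.val % 4 < 2 then 1 else 0
def r5 : Fin 16 → ZMod 2 := fun i => if i.val % 2 = 0 then 1 else 0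

/-- The first-order Reed-Muller code RM(1,4) ⊂ F₂¹⁶. -/
def RM : Submodule (ZMod 2) (Fin 16 → ZMod 2) :=
  Submodule.span (ZMod 2) {r1, r2, r3, r4, r5}

/-- The Hamming code H₁₆, the dual code of RM(1,4). -/
def H16 : Submodule (ZMod 2) (Fin 16 → ZMod 2) where
  carrier := {c | ∀ d ∈ RM, ∑ i, c i * d i = 0}
  zero_mem' := by intro d _; simp
  add_mem' := by
    intro a b ha hb d hd
    have h1 := ha d hd
    have h2 := hb d hd
    have : ∑ i, (a + b) i * d i = (∑ i, a i * d i) + ∑ i, b i * d i := by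
      simp [Pi.add_apply, add_mul, Finset.sum_add_distrib]
    simp only [Set.mem_setOf_eq] at *
    rw [this, h1, h2, add_zero]
  smul_mem' := by
    intro m a ha d hd
    have h1 := ha d hd
    have : ∑ i, (m • a) i * d i = m * ∑ i, a i * d i := by
      simp [Pi.smul_apply, smul_eq_mul, mul_assoc, Finset.mul_sum]
    simp only [Set.mem_setOf_eq] at *
    rw [this, h1, mul_zero]

/-! ### Auxiliary definitions and lemmas -/

def dot (x y : Fin 16 → ZMod 2) : ZMod 2 := ∑ i, x i * y i
def ind (i j : Fin 16) : Fin 16 → ZMod 2 := fun t => if t = i ∨ t = j then 1 else 0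

set_option maxHeartbeats 4000000 in
theorem keyN : ∀ i j : Fin 16, i ≠ j →
    ((univ ×ˢ univ).filter (fun p : Fin 16 × Fin 16 => p.1 < p.2 ∧
      r2 p.1 + r2 p.2 = r2 i + r2 j ∧ r3 p.1 + r3 p.2 = r3 i + r3 j ∧
      r4 p.1 + r4 p.2 = r4 i + r4 j ∧ r5 p.1 + r5 p.2 = r5 i + r5 j)).card = 8 := by
  decide

theorem dot_sub (x y r : Fin 16 → ZMod 2) : dot (x - y) r = dot x r - dot y r := by
  simp [dot, sub_mul, Finset.sum_sub_distrib]

theorem dot_ind {k l : Fin 16} (hkl : k ≠ l) (r : Fin 16 → ZMod 2) :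
    dot (ind k l) r = r k + r l := by
  have h : ∀ t ∈ univ, ind k l t * r t =
      (if t = k then r t else 0) + (if t = l then r t else 0) := by
    intro t _
    rw [ind]
    by_cases h1 : t = k
    · subst h1
      rw [if_pos (Or.inl rfl), if_pos rfl, if_neg hkl, one_mul, add_zero]
    · by_cases h2 : t = l
      · subst h2
        rw [if_pos (Or.inr rfl), if_neg h1, if_pos rfl, one_mul, zero_add]
      · rw [if_neg (by tauto), if_neg h1, if_neg h2, zero_mul, add_zero]
  rw [dot, Finset.sum_congr rfl h, Finset.sum_add_distrib,
    Finset.sum_ite_eq' univ k r, Finset.sum_ite_eq' univ l r,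
    if_pos (mem_univ k), if_pos (mem_univ l)]

theorem forall_dot_of (x : Fin 16 → ZMod 2) (h1 : dot x r1 = 0) (h2 : dot x r2 = 0)
    (h3 : dot x r3 = 0) (h4 : dot x r4 = 0) (h5 : dot x r5 = 0) :
    ∀ d ∈ RM, ∑ i, x i * d i = 0 := by
  intro d hd
  induction hd using Submodule.span_induction with
  | mem d hd =>
    rcases hd with rfl | rfl | rfl | rfl | rfl
    exacts [h1, h2, h3, h4, h5]
  | zero => simp
  | add a b _ _ ha hb =>
    simp only [Pi.add_apply, mul_add, Finset.sum_add_distrib, ha, hb, add_zero]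
  | smul m a _ ha =>
    have : ∀ i ∈ univ, x i * (m • a) i = m * (x i * a i) := fun i _ => by
      simp [Pi.smul_apply, smul_eq_mul]; ring
    rw [Finset.sum_congr rfl this, ← Finset.mul_sum, ha, mul_zero]

theorem mem_H16_iff (x : Fin 16 → ZMod 2) :
    x ∈ H16 ↔ (dot x r1 = 0 ∧ dot x r2 = 0 ∧ dot x r3 = 0 ∧ dot x r4 = 0 ∧ dot x r5 = 0) := by
  constructor
  · intro h
    have h' : ∀ d ∈ RM, ∑ i, x i * d i = 0 := h
    exact ⟨h' r1 (Submodule.subset_span (Set.mem_insert _ _)),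
      h' r2 (Submodule.subset_span (Set.mem_insert_of_mem _ (Set.mem_insert _ _))),
      h' r3 (Submodule.subset_span
        (Set.mem_insert_of_mem _ (Set.mem_insert_of_mem _ (Set.mem_insert _ _)))),
      h' r4 (Submodule.subset_span (Set.mem_insert_of_mem _
        (Set.mem_insert_of_mem _ (Set.mem_insert_of_mem _ (Set.mem_insert _ _))))),
      h' r5 (Submodule.subset_span (Set.mem_insert_of_mem _ (Set.mem_insert_of_mem _
        (Set.mem_insert_of_mem _ (Set.mem_insert_of_mem _ rfl)))))⟩
  · rintro ⟨h1, h2, h3, h4, h5⟩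
    exact forall_dot_of x h1 h2 h3 h4 h5

theorem zmod2_ne_zero {a : ZMod 2} (h : a ≠ 0) : a = 1 := by revert h; revert a; decide

theorem support_ind {k l : Fin 16} (_hkl : k ≠ l) :
    ({i | ind k l i ≠ 0} : Finset (Fin 16)) = {k, l} := by
  ext t
  rw [mem_filter]
  simp only [mem_filter, mem_univ, true_and, mem_insert, mem_singleton, ind]
  constructor
  · intro h
    by_contra hc
    push_neg at hc
    rw [if_neg (by tauto)] at h
    exact h rfl
  · intro h
    rw [if_pos h]
    exact one_ne_zero

theorem norm_ind {k l : Fin 16} (hkl : k ≠ l) : hammingNorm (ind k l) = 2 := by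
  rw [hammingNorm, support_ind hkl, Finset.card_pair hkl]

theorem norm_two_ind {v : Fin 16 → ZMod 2} (h : hammingNorm v = 2) :
    ∃ k l : Fin 16, k < l ∧ v = ind k l := by
  rw [hammingNorm, Finset.card_eq_two] at h
  obtain ⟨a, b, hab, hs⟩ := h
  have hv : ∀ t, v t ≠ 0 ↔ (t = a ∨ t = b) := by
    intro t
    have := Finset.ext_iff.mp hs t
    simpa using this
  have hval : v = ind a b := by
    funext t
    by_cases ht : t = a ∨ t = b
    · rw [show ind a b t = 1 by rw [ind]; exact if_pos ht]
      exact zmod2_ne_zero ((hv t).mpr ht)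
    · rw [show ind a b t = 0 by rw [ind]; exact if_neg ht]
      by_contra hne
      exact ht ((hv t).mp hne)
  have hcomm : ind a b = ind b a := by
    funext t; simp only [ind, or_comm]
  rcases lt_or_gt_of_ne hab with h1 | h1
  · exact ⟨a, b, h1, hval⟩
  · exact ⟨b, a, h1, by rw [hval, hcomm]⟩

theorem ind_inj {k l k' l' : Fin 16} (h1 : k < l) (h2 : k' < l')
    (he : ind k l = ind k' l') : k = k' ∧ l = l' := by
  have hkl : k ≠ l := ne_of_lt h1
  have hkl' : k' ≠ l' := ne_of_lt h2
  have hs : ({k, l} : Finset (Fin 16)) = {k', l'} := by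
    rw [← support_ind hkl, ← support_ind hkl', he]
  have hk : k = k' ∨ k = l' := by
    have : k ∈ ({k', l'} : Finset (Fin 16)) := hs ▸ (mem_insert_self k {l})
    simpa using this
  have hl : l = k' ∨ l = l' := by
    have : l ∈ ({k', l'} : Finset (Fin 16)) := hs ▸ (by simp)
    simpa using this
  have e1 : k.val < l.val := h1
  have e2 : k'.val < l'.val := h2
  have d1 : k.val = k'.val ∨ k.val = l'.val := by rcases hk with h | h <;> simp [h]
  have d2 : l.val = k'.val ∨ l.val = l'.val := by rcases hl with h | h <;> simp [h]
  constructor <;> (apply Fin.ext; omega)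

theorem H16_cond {i j k l : Fin 16} (hij : i ≠ j) (hkl : k ≠ l) :
    (ind k l - ind i j ∈ H16) ↔ (r2 k + r2 l = r2 i + r2 j ∧ r3 k + r3 l = r3 i + r3 j ∧
      r4 k + r4 l = r4 i + r4 j ∧ r5 k + r5 l = r5 i + r5 j) := by
  rw [mem_H16_iff]
  simp only [dot_sub, dot_ind hkl, dot_ind hij, sub_eq_zero]
  have hr1 : r1 k + r1 l = r1 i + r1 j := rfl
  simp only [hr1, true_and]

/-- For any weight-2 vector c, the coset H₁₆ + c contains exactly 8
vectors of weight 2. -/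
theorem h16_weight_two_coset (c : Fin 16 → ZMod 2) (hc : hammingNorm c = 2) :
    (Finset.univ.filter
        (fun v : Fin 16 → ZMod 2 => hammingNorm v = 2 ∧ v - c ∈ H16)).card = 8 := by
  obtain ⟨i, j, hij, rfl⟩ := norm_two_ind hc
  have hne : i ≠ j := ne_of_lt hij
  have hbij : ((univ ×ˢ univ).filter (fun p : Fin 16 × Fin 16 => p.1 < p.2 ∧
      r2 p.1 + r2 p.2 = r2 i + r2 j ∧ r3 p.1 + r3 p.2 = r3 i + r3 j ∧
      r4 p.1 + r4 p.2 = r4 i + r4 j ∧ r5 p.1 + r5 p.2 = r5 i + r5 j)).card =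
      (Finset.univ.filter
        (fun v : Fin 16 → ZMod 2 => hammingNorm v = 2 ∧ v - ind i j ∈ H16)).card := by
    apply Finset.card_bij (fun p _ => ind p.1 p.2)
    · intro p hp
      obtain ⟨hlt, h2, h3, h4, h5⟩ := (mem_filter.mp hp).2
      refine mem_filter.mpr ⟨mem_univ _, ?_, ?_⟩
      · exact norm_ind (ne_of_lt hlt)
      · exact (H16_cond hne (ne_of_lt hlt)).mpr ⟨h2, h3, h4, h5⟩
    · intro p1 hp1 p2 hp2 he
      have hlt1 := ((mem_filter.mp hp1).2).1
      have hlt2 := ((mem_filter.mp hp2).2).1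
      obtain ⟨he1, he2⟩ := ind_inj hlt1 hlt2 he
      exact Prod.ext he1 he2
    · intro v hv
      obtain ⟨hn, hH⟩ := (mem_filter.mp hv).2
      obtain ⟨k, l, hkl, rfl⟩ := norm_two_ind hn
      obtain ⟨h2, h3, h4, h5⟩ := (H16_cond hne (ne_of_lt hkl)).mp hH
      refine ⟨(k, l), mem_filter.mpr ⟨mem_product.mpr ⟨mem_univ _, mem_univ _⟩,
        hkl, h2, h3, h4, h5⟩, rfl⟩
  rw [← hbij]
  exact keyN i j hne
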